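/- Let $K = \mathbb{F}_q$ with $q \ge 3$, let $T = (K^*)^s$ be the affine torus, let $1 \le d < s$, and let $f$ be a nonzero element of $KV_d$, the $K$-linear span of the squarefree monomials of degree $d$. Then $|V_T(f)| \le (q-1)^{s} - (q-2)^d(q-1)^{s-d}$. -/

import Mathlib

open MvPolynomial
open scoped MonomialOrder

variable {K : Type*} [Field K] {s : ℕ}

/-- The exponent of the initial (leading) monomial of `f` with respect to the
monomial order `m` (it is `0` for `f = 0`). -/
noncomputable def leadExp (m : MonomialOrder (Fin s)) (f : MvPolynomial (Fin s) K) :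
    Fin s →₀ ℕ :=
  m.toSyn.symm (f.support.sup fun a => m.toSyn a)

/-- The coefficient of the initial monomial of `f`; `f` is monic when this is `1`. -/
noncomputable def leadCoeff (m : MonomialOrder (Fin s)) (f : MvPolynomial (Fin s) K) : K :=
  f.coeff (leadExp m f)

/-- The initial monomial `in_≺(f)` of `f`, as a (monic) monomial of the polynomial ring. -/
noncomputable def leadMon (m : MonomialOrder (Fin s)) (f : MvPolynomial (Fin s) K) :
    MvPolynomial (Fin s) K :=
  monomial (leadExp m f) (1 : K)

/-- The initial ideal `in_≺(I)` of an ideal `I`: the ideal generated by the initial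
monomials of the nonzero elements of `I`. -/
noncomputable def initialIdeal (m : MonomialOrder (Fin s)) (I : Ideal (MvPolynomial (Fin s) K)) :
    Ideal (MvPolynomial (Fin s) K) :=
  Ideal.span { g | ∃ f ∈ I, f ≠ 0 ∧ g = leadMon m f }

/-- The footprint `Δ_≺(I)` of `S/I`: the set of standard monomials, i.e. the (monic)
monomials that do not belong to the initial ideal of `I`. -/
noncomputable def stdMonomials (m : MonomialOrder (Fin s)) (I : Ideal (MvPolynomial (Fin s) K)) :
    Set (MvPolynomial (Fin s) K) :=
  { g | (∃ a : Fin s →₀ ℕ, g = monomial a (1 : K)) ∧ g ∉ initialIdeal m I }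

/-- `KΔ_≺(I)`, the `K`-linear span of the standard monomials of `S/I`. -/
noncomputable def stdSpan (m : MonomialOrder (Fin s)) (I : Ideal (MvPolynomial (Fin s) K)) :
    Submodule K (MvPolynomial (Fin s) K) :=
  Submodule.span K (stdMonomials m I)

/-- A monomial order is graded if monomials are first compared by their total degrees. -/
def IsGradedOrder (m : MonomialOrder (Fin s)) : Prop :=
  ∀ a b : Fin s →₀ ℕ, a.degree < b.degree → a ≺[m] b

/-- The vanishing ideal `I(X)` of a set of points `X ⊆ 𝔸^s = K^s`. -/
def affVanishingIdeal (X : Set (Fin s → K)) : Ideal (MvPolynomial (Fin s) K) where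
  carrier := { f | ∀ x ∈ X, eval x f = 0 }
  add_mem' := by
    intro a b ha hb x hx
    simp [ha x hx, hb x hx]
  zero_mem' := by intro x hx; simp
  smul_mem' := by
    intro c f hf x hx
    simp [smul_eq_mul, hf x hx]

/-- The evaluation map `S → K^X`, `f ↦ (f(P₁),…,f(P_m))`, at the points of a finite
set `X` of points of `𝔸^s`. -/
noncomputable def evalMap (X : Finset (Fin s → K)) :
    MvPolynomial (Fin s) K →ₗ[K] (X → K) where
  toFun f := fun x => eval (x : Fin s → K) f
  map_add' f g := by funext x; simp
  map_smul' c f := by funext x; simp [Algebra.smul_def]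

/-- The degree `deg(S/I)`.  For the ideals considered in this paper `S/I` is a
zero-dimensional ring, and its degree (the normalized leading coefficient of the
affine Hilbert polynomial) equals `dim_K (S/I)` (and is `0` when `I = S`). -/
noncomputable def adeg (I : Ideal (MvPolynomial (Fin s) K)) : ℕ :=
  Module.finrank K (MvPolynomial (Fin s) K ⧸ I)

/-- The affine Hilbert function `H_I^a(d) = dim_K (S_{≤d}/I_{≤d})`, computed as the
dimension of the image of `S_{≤d}` in `S/I`. -/
noncomputable def affineHilbert (I : Ideal (MvPolynomial (Fin s) K)) (d : ℕ) : ℕ :=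
  Module.finrank K
    ((restrictTotalDegree (Fin s) K d).map (Submodule.restrictScalars K I).mkQ)

/-- The support `χ(D)` of a subcode `D ⊆ K^ι`. -/
def codeSupport {ι : Type*} (D : Submodule K (ι → K)) : Set ι :=
  { i | ∃ v ∈ D, v i ≠ 0 }

/-- The `r`-th generalized Hamming weight of a linear code `C ⊆ K^ι`: the minimum
size of the support of an `r`-dimensional subcode. -/
noncomputable def ghw {ι : Type*} (C : Submodule K (ι → K)) (r : ℕ) : ℕ :=
  sInf { n | ∃ D : Submodule K (ι → K),
    D ≤ C ∧ Module.finrank K (↥D) = r ∧ (codeSupport D).ncard = n }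

/-- The minimum distance of a linear code: the least Hamming weight of a nonzero
codeword. -/
noncomputable def minDist {ι : Type*} (C : Submodule K (ι → K)) : ℕ :=
  sInf { n | ∃ v ∈ C, v ≠ 0 ∧ ({ i : ι | v i ≠ 0 }).ncard = n }

/-- The affine torus `T = (K^*)^s`. -/
noncomputable def torus (K : Type*) [Field K] [Fintype K] (s : ℕ) : Finset (Fin s → K) :=
  letI := Classical.decEq K
  Finset.univ.filter fun x => ∀ i, x i ≠ 0

/-- `V_d`: the set of squarefree (monic) monomials of degree `d`. -/
def sqfreeMonomials (K : Type*) [Field K] (s d : ℕ) : Set (MvPolynomial (Fin s) K) :=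
  { g | ∃ a : Fin s →₀ ℕ, (∀ i, a i ≤ 1) ∧ a.degree = d ∧ g = monomial a (1 : K) }

/-- `V_{≤d}`: the set of squarefree (monic) monomials of degree at most `d`. -/
def sqfreeMonomialsLe (K : Type*) [Field K] (s d : ℕ) : Set (MvPolynomial (Fin s) K) :=
  { g | ∃ a : Fin s →₀ ℕ, (∀ i, a i ≤ 1) ∧ a.degree ≤ d ∧ g = monomial a (1 : K) }

section Aux
set_option linter.unusedSectionVars false
set_option linter.unusedVariables false
variable [Fintype K]



attribute [local instance] Classical.propDecidable

lemma mem_torus {s' : ℕ} {x : Fin s' → K} : x ∈ torus K s' ↔ ∀ i, x i ≠ 0 := by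
  unfold torus; simp

set_option maxHeartbeats 1000000 in
open Finset in
lemma good_card {a b : K} (hb : b ≠ 0) :
    Fintype.card K - 2 ≤ (Finset.univ.filter fun x0 : K => x0 ≠ 0 ∧ a + x0 * b ≠ 0).card := by
  classical
  have h := Finset.card_filter_add_card_filter_not
    (s := (Finset.univ : Finset K)) (p := fun x0 : K => x0 ≠ 0 ∧ a + x0 * b ≠ 0)
  have hsub : (Finset.univ.filter fun x0 : K => ¬(x0 ≠ 0 ∧ a + x0 * b ≠ 0)) ⊆
      ({0, -a/b} : Finset K) := by
    intro x hx
    simp only [Finset.mem_filter, not_and_or, not_not] at hx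
    rcases hx.2 with h' | h'
    · simp [h']
    · have hx' : x = -a / b := by
        rw [eq_div_iff hb]
        linear_combination h'
      simp [hx']
  have h2 : (Finset.univ.filter fun x0 : K => ¬(x0 ≠ 0 ∧ a + x0 * b ≠ 0)).card ≤ 2 :=
    le_trans (Finset.card_le_card hsub)
      (le_trans (Finset.card_insert_le _ _) (by simp))
  have h3 : (Finset.univ : Finset K).card = Fintype.card K := Finset.card_univ
  omega

lemma good_card' :
    Fintype.card K - 1 ≤ (Finset.univ.filter fun x0 : K => x0 ≠ 0).card := by
  have h := Finset.card_filter_add_card_filter_not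
    (s := (Finset.univ : Finset K)) (p := fun x0 : K => x0 ≠ 0)
  have hsub : (Finset.univ.filter fun x0 : K => ¬(x0 ≠ 0)) ⊆ ({0} : Finset K) := by
    intro x hx
    simp only [Finset.mem_filter, not_not] at hx
    simp [hx.2]
  have h2 := Finset.card_le_card hsub
  have h3 : (Finset.univ : Finset K).card = Fintype.card K := Finset.card_univ
  simp only [Finset.card_singleton] at h2
  omega

set_option maxHeartbeats 1000000 in
open Finset in
lemma step_count {n : ℕ} (f : MvPolynomial (Fin (n+1)) K)
    (T' : Finset (Fin n → K)) (hT' : ∀ x ∈ T', ∀ i, x i ≠ 0)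
    (good : (Fin n → K) → Finset K)
    (hgood : ∀ x ∈ T', ∀ x0 ∈ good x, x0 ≠ 0 ∧ eval (Fin.cons x0 x) f ≠ 0)
    (k : ℕ) (hk : ∀ x ∈ T', k ≤ (good x).card) :
    k * T'.card ≤ ((torus K (n+1)).filter fun x => eval x f ≠ 0).card := by
  classical
  have hdisj : ∀ x ∈ T', ∀ y ∈ T', x ≠ y →
      Disjoint ((good x).image fun x0 => Fin.cons x0 x)
        ((good y).image fun x0 => (Fin.cons x0 y : Fin (n+1) → K)) := by
    intro x _ y _ hxy
    simp only [Finset.disjoint_left, Finset.mem_image]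
    rintro z ⟨a, _, rfl⟩ ⟨b, _, hb⟩
    exact hxy (Fin.cons_inj.mp hb.symm).2
  have hsub : (T'.biUnion fun x => (good x).image fun x0 => Fin.cons x0 x) ⊆
      (torus K (n+1)).filter fun x => eval x f ≠ 0 := by
    intro z hz
    simp only [Finset.mem_biUnion, Finset.mem_image] at hz
    obtain ⟨x, hx, x0, hx0, rfl⟩ := hz
    obtain ⟨h1, h2⟩ := hgood x hx x0 hx0
    refine Finset.mem_filter.mpr ⟨mem_torus.mpr ?_, h2⟩
    intro i
    refine Fin.cases ?_ ?_ i
    · simpa using h1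
    · intro j; simpa using hT' x hx j
  have e1 : k * T'.card = ∑ _x ∈ T', k := by rw [Finset.sum_const, smul_eq_mul, Nat.mul_comm]
  have e2 : ∑ _x ∈ T', k ≤ ∑ x ∈ T', ((good x).image fun x0 => (Fin.cons x0 x : Fin (n+1) → K)).card := by
    refine Finset.sum_le_sum fun x hx => ?_
    rw [Finset.card_image_of_injective _ fun a b hab => (Fin.cons_inj.mp hab).1]
    exact hk x hx
  have e3 : (T'.biUnion fun x => (good x).image fun x0 => (Fin.cons x0 x : Fin (n+1) → K)).card
      = ∑ x ∈ T', ((good x).image fun x0 => (Fin.cons x0 x : Fin (n+1) → K)).card :=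
    Finset.card_biUnion hdisj
  have e4 := Finset.card_le_card hsub
  omega

/-- All exponent vectors in the support are squarefree of degree `d`. -/
def Sqf {n : ℕ} (d : ℕ) (f : MvPolynomial (Fin n) K) : Prop :=
  ∀ a ∈ f.support, (∀ i, a i ≤ 1) ∧ a.degree = d

lemma decomp {n : ℕ} (f : MvPolynomial (Fin (n+1)) K) (hsq : ∀ a ∈ f.support, a 0 ≤ 1) :
    finSuccEquiv K n f = Polynomial.C ((finSuccEquiv K n f).coeff 0) +
      Polynomial.C ((finSuccEquiv K n f).coeff 1) * Polynomial.X := by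
  ext i m : 2
  match i with
  | 0 => simp
  | 1 => simp
  | (k+2) =>
    rw [Polynomial.coeff_add, Polynomial.coeff_C, Polynomial.coeff_C_mul, Polynomial.coeff_X]
    rw [if_neg (by omega : ¬ (k+2 : ℕ) = 0), if_neg (by omega : ¬ (1 = (k+2 : ℕ)))]
    rw [finSuccEquiv_coeff_coeff]
    simp only [add_zero, mul_zero, coeff_zero]
    by_contra hc
    have hm : m.cons (k+2) ∈ f.support := MvPolynomial.mem_support_iff.mpr hc
    have := (hsq _ hm)
    rw [Finsupp.cons_zero] at this
    omega

lemma eval_cons {n : ℕ} (f : MvPolynomial (Fin (n+1)) K) (hsq : ∀ a ∈ f.support, a 0 ≤ 1)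
    (y : K) (x : Fin n → K) :
    eval (Fin.cons y x) f = eval x ((finSuccEquiv K n f).coeff 0) +
      y * eval x ((finSuccEquiv K n f).coeff 1) := by
  rw [eval_eq_eval_mv_eval']
  conv_lhs => rw [decomp f hsq]
  rw [Polynomial.map_add, Polynomial.map_mul, Polynomial.map_C, Polynomial.map_C,
    Polynomial.map_X, Polynomial.eval_add, Polynomial.eval_mul, Polynomial.eval_C,
    Polynomial.eval_C, Polynomial.eval_X, mul_comm]

lemma sqf_of_mem_span {n d : ℕ} {f : MvPolynomial (Fin n) K}
    (hf : f ∈ Submodule.span K (sqfreeMonomials K n d)) : Sqf d f := by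
  classical
  let M : Submodule K (MvPolynomial (Fin n) K) :=
    { carrier := {f | Sqf d f}
      add_mem' := fun {a b} ha hb m hm => by
        rcases Finset.mem_union.mp (MvPolynomial.support_add hm) with h | h
        exacts [ha m h, hb m h]
      zero_mem' := fun m hm => by simp at hm
      smul_mem' := fun c f hf m hm => hf m (MvPolynomial.support_smul hm) }
  have hle : Submodule.span K (sqfreeMonomials K n d) ≤ M := by
    rw [Submodule.span_le]
    rintro g ⟨a, h1, h2, rfl⟩ m hm
    rw [MvPolynomial.mem_support_iff, MvPolynomial.coeff_monomial] at hm
    split_ifs at hm with h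
    · subst h; exact ⟨h1, h2⟩
    · simp at hm
  exact hle hf

lemma degree_eq_sum_univ {n : ℕ} (a : Fin n →₀ ℕ) : a.degree = ∑ i, a i :=
  Finset.sum_subset (Finset.subset_univ _)
    (fun i _ hi => Finsupp.notMem_support_iff.mp hi)

lemma degree_cons {n : ℕ} (y : ℕ) (m : Fin n →₀ ℕ) :
    (m.cons y).degree = y + m.degree := by
  rw [degree_eq_sum_univ, degree_eq_sum_univ, Fin.sum_univ_succ]
  simp [Finsupp.cons_zero, Finsupp.cons_succ]

lemma torus_card (s' : ℕ) : (torus K s').card = (Fintype.card K - 1) ^ s' := by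
  classical
  have h1 : (torus K s').card = Fintype.card {x : Fin s' → K // ∀ i, x i ≠ 0} := by
    rw [Fintype.card_subtype]
    unfold torus
    congr 1
  rw [h1, Fintype.card_congr (Equiv.subtypePiEquivPi (p := fun (_ : Fin s') (y : K) => y ≠ 0))]
  rw [Fintype.card_pi]
  have h2 : Fintype.card {y : K // y ≠ 0} = Fintype.card K - 1 := by
    rw [Fintype.card_subtype_compl (p := fun y : K => y = 0), Fintype.card_subtype_eq]
  simp [h2]

lemma key (hq : 3 ≤ Fintype.card K) :
    ∀ (n d : ℕ) (f : MvPolynomial (Fin n) K), Sqf d f → f ≠ 0 →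
      (Fintype.card K - 2)^d * (Fintype.card K - 1)^(n-d) ≤
        ((torus K n).filter fun x => eval x f ≠ 0).card := by
  intro n
  induction n with
  | zero =>
    intro d f hsq hf0
    obtain ⟨a, ha⟩ := (MvPolynomial.support_nonempty.mpr hf0)
    have ha0 : a = 0 := Subsingleton.elim _ _
    have hd : d = 0 := by
      have := (hsq a ha).2
      rw [ha0] at this
      simpa using this.symm
    subst hd
    simp only [pow_zero, Nat.zero_sub, one_mul]
    refine Finset.card_pos.mpr ⟨fun i => i.elim0, Finset.mem_filter.mpr ⟨mem_torus.mpr (fun i => i.elim0), ?_⟩⟩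
    rw [MvPolynomial.eq_C_of_isEmpty f] at ha ⊢
    rw [eval_C]
    intro hc
    rw [hc] at ha
    simp at ha
  | succ n ih =>
    intro d f hsq hf0
    have hsq0 : ∀ a ∈ f.support, a 0 ≤ 1 := fun a ha => (hsq a ha).1 0
    set g := (finSuccEquiv K n f).coeff 1 with hgdef
    set h := (finSuccEquiv K n f).coeff 0 with hhdef
    have heval : ∀ (y : K) (x : Fin n → K),
        eval (Fin.cons y x) f = eval x h + y * eval x g := eval_cons f hsq0
    have hmemg : ∀ m ∈ g.support, (m.cons 1) ∈ f.support := by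
      intro m hm
      rw [MvPolynomial.mem_support_iff] at hm ⊢
      rwa [← finSuccEquiv_coeff_coeff] at *
    have hmemh : ∀ m ∈ h.support, (m.cons 0) ∈ f.support := by
      intro m hm
      rw [MvPolynomial.mem_support_iff] at hm ⊢
      rwa [← finSuccEquiv_coeff_coeff] at *
    by_cases hg : g = 0
    · -- f does not involve the first variable
      have hh : h ≠ 0 := by
        intro hh0
        apply hf0
        have hz : finSuccEquiv K n f = 0 := by
          rw [decomp f hsq0, ← hgdef, ← hhdef, hh0, hg]
          simp
        exact (map_eq_zero_iff _ (AlgEquiv.injective _)).mp hz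
      have hSh : Sqf d h := by
        intro m hm
        obtain ⟨h1, h2⟩ := hsq _ (hmemh m hm)
        constructor
        · intro i
          have := h1 i.succ
          rwa [Finsupp.cons_succ] at this
        · have := h2
          rwa [degree_cons, zero_add] at this
      obtain ⟨m, hm⟩ := MvPolynomial.support_nonempty.mpr hh
      have hd : d ≤ n := by
        obtain ⟨h1, h2⟩ := hSh m hm
        calc d = m.degree := h2.symm
          _ = ∑ i, m i := degree_eq_sum_univ m
          _ ≤ ∑ _i : Fin n, 1 := Finset.sum_le_sum (fun i _ => h1 i)
          _ = n := by simp
      have IH := ih d h hSh hh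
      have hstep := step_count f ((torus K n).filter fun x => eval x h ≠ 0)
        (fun x hx => mem_torus.mp (Finset.mem_filter.mp hx).1)
        (fun _ => Finset.univ.filter fun x0 : K => x0 ≠ 0)
        (fun x hx x0 hx0 => by
          refine ⟨(Finset.mem_filter.mp hx0).2, ?_⟩
          rw [heval, hg]
          simpa using (Finset.mem_filter.mp hx).2)
        (Fintype.card K - 1) (fun x _ => good_card')
      calc (Fintype.card K - 2)^d * (Fintype.card K - 1)^(n+1-d)
          = (Fintype.card K - 1) * ((Fintype.card K - 2)^d * (Fintype.card K - 1)^(n-d)) := by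
            rw [show n+1-d = (n-d)+1 by omega, pow_succ]; ring
        _ ≤ (Fintype.card K - 1) * ((torus K n).filter fun x => eval x h ≠ 0).card :=
            Nat.mul_le_mul_left _ IH
        _ ≤ _ := hstep
    · -- the first variable occurs in f
      obtain ⟨m, hm⟩ := MvPolynomial.support_nonempty.mpr hg
      have hd1 : 1 ≤ d := by
        have := (hsq _ (hmemg m hm)).2
        rw [degree_cons] at this
        omega
      obtain ⟨e, rfl⟩ : ∃ e, d = e + 1 := ⟨d-1, by omega⟩
      have hSg : Sqf (e+1-1) g := by
        intro m' hm'
        obtain ⟨h1, h2⟩ := hsq _ (hmemg m' hm')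
        constructor
        · intro i
          have := h1 i.succ
          rwa [Finsupp.cons_succ] at this
        · rw [degree_cons] at h2
          omega
      rw [Nat.add_sub_cancel] at hSg
      have IH := ih e g hSg hg
      have hstep := step_count f ((torus K n).filter fun x => eval x g ≠ 0)
        (fun x hx => mem_torus.mp (Finset.mem_filter.mp hx).1)
        (fun x => Finset.univ.filter fun x0 : K => x0 ≠ 0 ∧ eval x h + x0 * eval x g ≠ 0)
        (fun x hx x0 hx0 => by
          obtain ⟨h1, h2⟩ := (Finset.mem_filter.mp hx0).2
          exact ⟨h1, by rw [heval]; exact h2⟩)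
        (Fintype.card K - 2)
        (fun x hx => good_card (Finset.mem_filter.mp hx).2)
      calc (Fintype.card K - 2)^(e+1) * (Fintype.card K - 1)^(n+1-(e+1))
          = (Fintype.card K - 2) *
              ((Fintype.card K - 2)^e * (Fintype.card K - 1)^(n-e)) := by
            rw [Nat.succ_sub_succ, pow_succ]
            ring
        _ ≤ (Fintype.card K - 2) * ((torus K n).filter fun x => eval x g ≠ 0).card :=
            Nat.mul_le_mul_left _ IH
        _ ≤ _ := hstep

end Aux

/-- Proposition: a nonzero homogeneous squarefree polynomial of degree `d < s` has at
most `(q-1)^s - (q-2)^d (q-1)^{s-d}` zeros in the torus `T = (K^*)^s`. -/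
theorem card_torus_zeros_squarefree_homogeneous [Fintype K]
    (hq : 3 ≤ Fintype.card K) (d : ℕ) (hd1 : 1 ≤ d) (hds : d < s)
    (f : MvPolynomial (Fin s) K) (hf : f ∈ Submodule.span K (sqfreeMonomials K s d))
    (hf0 : f ≠ 0) :
    ({ x : Fin s → K | (∀ i, x i ≠ 0) ∧ eval x f = 0 }).ncard ≤
      (Fintype.card K - 1) ^ s -
        (Fintype.card K - 2) ^ d * (Fintype.card K - 1) ^ (s - d) := by
  classical
  have hsq : Sqf d f := sqf_of_mem_span hf
  have key' := key hq s d f hsq hf0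
  have hset : {x : Fin s → K | (∀ i, x i ≠ 0) ∧ eval x f = 0} =
      ↑((torus K s).filter fun x => eval x f = 0) := by
    ext x
    simp [mem_torus]
  rw [hset, Set.ncard_coe_finset]
  have hsplit := Finset.card_filter_add_card_filter_not
    (s := torus K s) (p := fun x => eval x f = 0)
  rw [torus_card] at hsplit
  have he : ((torus K s).filter fun x => ¬ eval x f = 0).card
      = ((torus K s).filter fun x => eval x f ≠ 0).card := by
    congr 1
  omega
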